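/- The linear map H² → H⁶ given by cup product with (1/((r+2)c))·b is an isomorphism, with inverse the map B_* : H⁶ → H² defined by B_*(β) := Σᵢ (∫ β eᵢ) e^i. -/

import Mathlib

/-- The linear map `H² → H⁶` given by cup product with `(1/((r+2)c))·b` is an
isomorphism, with inverse `B_* : H⁶ → H²`, `B_*(β) = Σᵢ (∫ β eᵢ) e^i`.
We express this by saying both composites are the identity (on `H²` and on `H⁶`). -/
theorem stmt2 {A : Type*} [CommRing A] [Algebra ℚ A]
    (H2 H6 : Submodule ℚ A)
    (I : A →ₗ[ℚ] ℚ) (Bf : A →ₗ[ℚ] A →ₗ[ℚ] ℚ) (c : ℚ) (hc : c ≠ 0)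
    (hBsymm : ∀ x y : A, Bf x y = Bf y x)
    (hInd : ∀ x : A, (∀ y : A, I (x * y) = 0) → x = 0)
    (hfuj : ∀ α β γ δ : A, α ∈ H2 → β ∈ H2 → γ ∈ H2 → δ ∈ H2 →
      I (α * β * γ * δ) =
        c * (Bf α β * Bf γ δ + Bf α γ * Bf β δ + Bf α δ * Bf β γ))
    {ι : Type*} [Fintype ι] [DecidableEq ι] (e f : ι → A)
    (he : ∀ i, e i ∈ H2) (hf : ∀ i, f i ∈ H2)
    (hdual : ∀ i j, Bf (e i) (f j) = if i = j then 1 else 0)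
    (hspan : Submodule.span ℚ (Set.range e) = H2)
    (hspanf : Submodule.span ℚ (Set.range f) = H2)
    -- multiplication by `b` lands in `H⁶` and the `I`-pairing of `H⁶` against `H²`
    -- is nondegenerate
    (hb6 : ∀ x ∈ H2, (∑ i, e i * f i) * x ∈ H6)
    (hnd6 : ∀ x ∈ H6, (∀ γ ∈ H2, I (x * γ) = 0) → x = 0) :
    (∀ β ∈ H2,
      (∑ i, I (((1 / (((Fintype.card ι : ℚ) + 2) * c)) • ((∑ j, e j * f j) * β)) * e i) • f i)
        = β) ∧
    (∀ β ∈ H6,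
      (1 / (((Fintype.card ι : ℚ) + 2) * c)) • ((∑ j, e j * f j) * (∑ i, I (β * e i) • f i))
        = β) := by
  set r : ℚ := (Fintype.card ι : ℚ) with hr
  have hrc : (r + 2) * c ≠ 0 := by
    apply mul_ne_zero _ hc
    have : (0:ℚ) ≤ r := by positivity
    linarith
  -- expansion in basis f
  have expf : ∀ β ∈ H2, (∑ j, Bf β (e j) • f j) = β := by
    intro β hβ
    rw [← hspanf] at hβ
    induction hβ using Submodule.span_induction with
    | mem x hx =>
      obtain ⟨k, rfl⟩ := hx
      rw [Finset.sum_eq_single k]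
      · rw [hBsymm, hdual, if_pos rfl, one_smul]
      · intro j _ hj
        rw [hBsymm, hdual, if_neg hj, zero_smul]
      · intro h; exact absurd (Finset.mem_univ k) h
    | zero => simp
    | add x y hx hy ihx ihy =>
      simp only [map_add, LinearMap.add_apply, add_smul]
      rw [Finset.sum_add_distrib, ihx, ihy]
    | smul a x hx ih =>
      simp only [map_smul, LinearMap.smul_apply, smul_assoc]
      rw [← Finset.smul_sum, ih]
  -- expansion in basis e
  have expe : ∀ β ∈ H2, (∑ j, Bf β (f j) • e j) = β := by
    intro β hβ
    rw [← hspan] at hβ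
    induction hβ using Submodule.span_induction with
    | mem x hx =>
      obtain ⟨k, rfl⟩ := hx
      rw [Finset.sum_eq_single k]
      · rw [hdual, if_pos rfl, one_smul]
      · intro j _ hj
        rw [hdual, if_neg (Ne.symm hj), zero_smul]
      · intro h; exact absurd (Finset.mem_univ k) h
    | zero => simp
    | add x y hx hy ihx ihy =>
      simp only [map_add, LinearMap.add_apply, add_smul]
      rw [Finset.sum_add_distrib, ihx, ihy]
    | smul a x hx ih =>
      simp only [map_smul, LinearMap.smul_apply, smul_assoc]
      rw [← Finset.smul_sum, ih]
  -- key computation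
  have key : ∀ α ∈ H2, ∀ γ ∈ H2, I ((∑ j, e j * f j) * α * γ) = (r + 2) * c * Bf α γ := by
    intro α hα γ hγ
    have hexp : (∑ j, e j * f j) * α * γ = ∑ j, e j * f j * α * γ := by
      rw [Finset.sum_mul, Finset.sum_mul]
    rw [hexp, map_sum]
    have step : ∀ j, I (e j * f j * α * γ)
        = c * (Bf (e j) (f j) * Bf α γ + Bf (e j) α * Bf (f j) γ + Bf (e j) γ * Bf (f j) α) :=
      fun j => hfuj _ _ _ _ (he j) (hf j) hα hγ
    have h1 : ∑ j, Bf (e j) α * Bf (f j) γ = Bf α γ := by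
      conv_rhs => rw [← expf α hα]
      simp only [map_sum, LinearMap.sum_apply, map_smul, LinearMap.smul_apply, smul_eq_mul]
      exact Finset.sum_congr rfl fun j _ => by rw [hBsymm (e j) α]
    have h2 : ∑ j, Bf (e j) γ * Bf (f j) α = Bf α γ := by
      rw [← hBsymm γ α]
      conv_rhs => rw [← expf γ hγ]
      simp only [map_sum, LinearMap.sum_apply, map_smul, LinearMap.smul_apply, smul_eq_mul]
      exact Finset.sum_congr rfl fun j _ => by rw [hBsymm (e j) γ]
    simp only [step, hdual, if_true, eq_self_iff_true, one_mul]
    rw [← Finset.mul_sum, Finset.sum_add_distrib, Finset.sum_add_distrib, h1, h2,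
      Finset.sum_const, Finset.card_univ, nsmul_eq_mul, ← hr]
    ring
  constructor
  · intro β hβ
    have hterm : ∀ i, I ((1 / ((r + 2) * c)) • ((∑ j, e j * f j) * β) * e i) = Bf β (e i) := by
      intro i
      rw [smul_mul_assoc, map_smul, key β hβ (e i) (he i), smul_eq_mul]
      rw [← mul_assoc, one_div_mul_cancel hrc, one_mul]
    simp only [hterm]
    exact expf β hβ
  · intro β hβ
    set α : A := ∑ i, I (β * e i) • f i with hα
    have hαH2 : α ∈ H2 := Submodule.sum_mem _ fun i _ => Submodule.smul_mem _ _ (hf i)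
    set x : A := (1 / ((r + 2) * c)) • ((∑ j, e j * f j) * α) - β with hx
    have hxH6 : x ∈ H6 := Submodule.sub_mem _ (Submodule.smul_mem _ _ (hb6 α hαH2)) hβ
    have hxz : x = 0 := by
      apply hnd6 x hxH6
      intro γ hγ
      rw [hx, sub_mul, map_sub, smul_mul_assoc, map_smul, key α hαH2 γ hγ, smul_eq_mul]
      have hBαγ : Bf α γ = ∑ i, I (β * e i) * Bf (f i) γ := by
        rw [hα]
        simp only [map_sum, LinearMap.sum_apply, map_smul, LinearMap.smul_apply, smul_eq_mul]
      have hIβγ : I (β * γ) = ∑ i, I (β * e i) * Bf (f i) γ := by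
        conv_lhs => rw [← expe γ hγ, Finset.mul_sum]
        rw [map_sum]
        refine Finset.sum_congr rfl fun i _ => ?_
        rw [mul_smul_comm, map_smul, smul_eq_mul, hBsymm (f i) γ]
        ring
      have hcanc : 1 / ((r + 2) * c) * ((r + 2) * c * Bf α γ) = Bf α γ := by
        rw [← mul_assoc, one_div_mul_cancel hrc, one_mul]
      rw [hcanc, hBαγ, hIβγ]
      ring
    have := sub_eq_zero.mp (hx ▸ hxz)
    exact this
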